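/- There is a bijection between loops of length n based at * of weight 1 in a fair and balanced δ-graph Γ, and loops of length n based at [1,*] in its tracial cover Γ_tr. -/

import Mathlib

/-- A fair and balanced `δ`-graph: a locally finite directed multigraph with positive
edge weights, an involution on edges reversing source and target with
`w e * w (bar e) = 1`, and outgoing weight sum `δ` at every vertex. -/
structure FBGraph (δ : ℝ) where
  V : Type
  E : Type
  s : E → V
  t : E → V
  w : E → ℝ
  w_pos : ∀ e, 0 < w e
  bar : E → E
  bar_bar : ∀ e, bar (bar e) = e
  s_bar : ∀ e, s (bar e) = t e
  t_bar : ∀ e, t (bar e) = s e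
  w_bar : ∀ e, w e * w (bar e) = 1
  out_finite : ∀ x : V, {e : E | s e = x}.Finite
  sum_w : ∀ x : V, ∑ e ∈ (out_finite x).toFinset, w e = δ

/-- Paths in a directed graph given by source and target maps. -/
inductive IsPathOn {V E : Type} (s t : E → V) : V → V → List E → Prop
  | nil (v : V) : IsPathOn s t v v []
  | cons {a c : V} {e : E} {l : List E} :
      s e = a → IsPathOn s t (t e) c l → IsPathOn s t a c (e :: l)

/-- The weight of a path: the product of its edge weights. -/
def pathWeight {E : Type} (w : E → ℝ) (l : List E) : ℝ := (l.map w).prod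

theorem pathWeight_append {E : Type} (w : E → ℝ) (l₁ l₂ : List E) :
    pathWeight w (l₁ ++ l₂) = pathWeight w l₁ * pathWeight w l₂ := by
  simp [pathWeight]

theorem IsPathOn.append {V E : Type} {s t : E → V} {a b c : V} {l₁ l₂ : List E}
    (h₁ : IsPathOn s t a b l₁) (h₂ : IsPathOn s t b c l₂) :
    IsPathOn s t a c (l₁ ++ l₂) := by
  induction h₁ with
  | nil v => simpa using h₂
  | cons hs _ ih => exact IsPathOn.cons hs (ih h₂)

theorem IsPathOn.single {V E : Type} {s t : E → V} (e : E) :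
    IsPathOn s t (s e) (t e) [e] := IsPathOn.cons rfl (IsPathOn.nil _)

/-- The set of weights of loops based at `x`. -/
def loopWeights {δ : ℝ} (G : FBGraph δ) (x : G.V) : Set ℝ :=
  {r | ∃ l : List G.E, IsPathOn G.s G.t x x l ∧ pathWeight G.w l = r}

/-- Vertices of the tracial cover `Γ_tr`: pairs `[λ, v]` such that there is a path
from `x` to `v` of weight `λ`. -/
abbrev TrV {δ : ℝ} (G : FBGraph δ) (x : G.V) : Type :=
  {p : ℝ × G.V // ∃ l : List G.E, IsPathOn G.s G.t x p.2 l ∧ pathWeight G.w l = p.1}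

/-- Edges of the tracial cover: an edge out of `[λ, v]` for each edge `e` of `Γ`
with source `v`. -/
abbrev TrE {δ : ℝ} (G : FBGraph δ) (x : G.V) : Type :=
  {p : (ℝ × G.V) × G.E //
    (∃ l : List G.E, IsPathOn G.s G.t x p.1.2 l ∧ pathWeight G.w l = p.1.1) ∧
      G.s p.2 = p.1.2}

def trS {δ : ℝ} (G : FBGraph δ) (x : G.V) (e : TrE G x) : TrV G x := ⟨e.val.1, e.prop.1⟩

def trW {δ : ℝ} (G : FBGraph δ) (x : G.V) (e : TrE G x) : ℝ := G.w e.val.2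

def trT {δ : ℝ} (G : FBGraph δ) (x : G.V) (e : TrE G x) : TrV G x :=
  ⟨(e.val.1.1 * G.w e.val.2, G.t e.val.2), by
    obtain ⟨⟨l, hl, hw⟩, hs⟩ := e.prop
    refine ⟨l ++ [e.val.2], ?_, ?_⟩
    · exact hl.append (hs ▸ IsPathOn.single e.val.2)
    · rw [pathWeight_append, hw]; simp [pathWeight]⟩

/-- The distinguished vertex `[1, x]` of the tracial cover. -/
def trBase {δ : ℝ} (G : FBGraph δ) (x : G.V) : TrV G x :=
  ⟨(1, x), ⟨[], IsPathOn.nil x, by simp [pathWeight]⟩⟩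

theorem IsPathOn.cons_src {V E : Type} {s t : E → V} {a c : V} {e : E} {l : List E}
    (h : IsPathOn s t a c (e :: l)) : s e = a := by cases h; assumption

theorem IsPathOn.cons_tail {V E : Type} {s t : E → V} {a c : V} {e : E} {l : List E}
    (h : IsPathOn s t a c (e :: l)) : IsPathOn s t (t e) c l := by cases h; assumption

/-- Lift a path in `G` starting at `p.val.2` to a path in the tracial cover. -/
def trLift {δ : ℝ} (G : FBGraph δ) (x : G.V) :
    (p : TrV G x) → (l : List G.E) → (c : G.V) →
    IsPathOn G.s G.t p.val.2 c l → List (TrE G x)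
  | _, [], _, _ => []
  | p, e :: l, c, h =>
    let e' : TrE G x := ⟨(p.val, e), p.prop, h.cons_src⟩
    e' :: trLift G x (trT G x e') l c h.cons_tail

theorem trLift_proj {δ : ℝ} (G : FBGraph δ) (x : G.V) :
    ∀ (p : TrV G x) (l : List G.E) (c : G.V) (h : IsPathOn G.s G.t p.val.2 c l),
      (trLift G x p l c h).map (fun E => E.val.2) = l := by
  intro p l
  induction l generalizing p with
  | nil => intro c h; rfl
  | cons e l ih =>
    intro c h
    simp only [trLift, List.map_cons, List.cons.injEq]
    exact ⟨trivial, ih _ c h.cons_tail⟩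

theorem trLift_length {δ : ℝ} (G : FBGraph δ) (x : G.V) :
    ∀ (p : TrV G x) (l : List G.E) (c : G.V) (h : IsPathOn G.s G.t p.val.2 c l),
      (trLift G x p l c h).length = l.length := by
  intro p l
  induction l generalizing p with
  | nil => intro c h; rfl
  | cons e l ih => intro c h; simp [trLift, ih]; exact ih _ c h.cons_tail

theorem trLift_isPath {δ : ℝ} (G : FBGraph δ) (x : G.V) :
    ∀ (p : TrV G x) (l : List G.E) (c : G.V) (h : IsPathOn G.s G.t p.val.2 c l)
      (q : TrV G x), q.val = (p.val.1 * pathWeight G.w l, c) →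
      IsPathOn (trS G x) (trT G x) p q (trLift G x p l c h) := by
  intro p l
  induction l generalizing p with
  | nil =>
    intro c h q hq
    cases h
    have : p = q := by
      apply Subtype.ext
      rw [hq]; simp [pathWeight]
    rw [← this]
    exact IsPathOn.nil p
  | cons e l ih =>
    intro c h q hq
    refine IsPathOn.cons (Subtype.ext rfl) ?_
    refine ih _ c h.cons_tail q ?_
    rw [hq]
    simp [trT, pathWeight, mul_assoc]

theorem trProj_isPath {δ : ℝ} (G : FBGraph δ) (x : G.V) :
    ∀ (L : List (TrE G x)) (p q : TrV G x),
      IsPathOn (trS G x) (trT G x) p q L →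
      IsPathOn G.s G.t p.val.2 q.val.2 (L.map (fun E => E.val.2)) := by
  intro L
  induction L with
  | nil =>
    intro p q h; cases h; exact IsPathOn.nil _
  | cons e L ih =>
    intro p q h
    have hs := h.cons_src
    have h1 : e.val.1 = p.val := congrArg Subtype.val hs
    refine IsPathOn.cons ?_ ?_
    · rw [e.prop.2, h1]
    · exact ih _ q h.cons_tail

theorem trProj_weight {δ : ℝ} (G : FBGraph δ) (x : G.V) :
    ∀ (L : List (TrE G x)) (p q : TrV G x),
      IsPathOn (trS G x) (trT G x) p q L →
      q.val.1 = p.val.1 * pathWeight G.w (L.map (fun E => E.val.2)) := by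
  intro L
  induction L with
  | nil => intro p q h; cases h; simp [pathWeight]
  | cons e L ih =>
    intro p q h
    have h1 : e.val.1 = p.val := congrArg Subtype.val h.cons_src
    have := ih _ q h.cons_tail
    rw [this]
    simp [trT, h1, pathWeight, mul_assoc]

theorem trLift_proj_eq {δ : ℝ} (G : FBGraph δ) (x : G.V) :
    ∀ (L : List (TrE G x)) (p q : TrV G x)
      (hL : IsPathOn (trS G x) (trT G x) p q L)
      (h : IsPathOn G.s G.t p.val.2 q.val.2 (L.map (fun E => E.val.2))),
      trLift G x p (L.map (fun E => E.val.2)) q.val.2 h = L := by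
  intro L
  induction L with
  | nil => intro p q hL h; rfl
  | cons e L ih =>
    intro p q hL h
    have h1 : e.val.1 = p.val := congrArg Subtype.val hL.cons_src
    have he : (⟨(p.val, e.val.2), p.prop, h.cons_src⟩ : TrE G x) = e := by
      apply Subtype.ext
      simp [← h1]
    simp only [List.map_cons, trLift, List.cons.injEq]
    refine ⟨he, ?_⟩
    have htail := hL.cons_tail
    rw [← he] at htail
    exact ih _ q htail h.cons_tail

/-- There is a bijection between loops of length `n` based at `*` of weight `1` in a
fair and balanced `δ`-graph `Γ`, and loops of length `n` based at `[1, *]` in its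
tracial cover `Γ_tr`. -/
theorem loops_bijection {δ : ℝ} (G : FBGraph δ) (x : G.V) (n : ℕ) :
    Nonempty
      ({l : List G.E //
          IsPathOn G.s G.t x x l ∧ pathWeight G.w l = 1 ∧ l.length = n} ≃
        {L : List (TrE G x) //
          IsPathOn (trS G x) (trT G x) (trBase G x) (trBase G x) L ∧ L.length = n}) := by
  refine ⟨{
    toFun := fun l => ⟨trLift G x (trBase G x) l.val x l.prop.1, ?_, ?_⟩
    invFun := fun L => ⟨L.val.map (fun E => E.val.2), ?_, ?_, ?_⟩
    left_inv := ?_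
    right_inv := ?_ }⟩
  · exact trLift_isPath G x _ _ _ _ _ (by simp [trBase, l.prop.2.1])
  · exact (trLift_length G x _ _ _ _).trans l.prop.2.2
  · exact trProj_isPath G x _ _ _ L.prop.1
  · have := trProj_weight G x L.val _ _ L.prop.1
    simp only [trBase] at this
    linarith
  · rw [List.length_map]; exact L.prop.2
  · intro l
    apply Subtype.ext
    exact trLift_proj G x _ _ _ _
  · intro L
    apply Subtype.ext
    exact trLift_proj_eq G x L.val _ _ L.prop.1 _
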